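/- arXiv:2511.08000 — 3 statements merged into one kernel-verified Lean document; each statement's English description precedes it below -/
import Mathlib

section
/- Let p ∈ (1, 2] and suppose f, g ∈ L^p satisfy f ⊥_p g (Birkhoff–James orthogonality). Then ‖f + g‖_p^p ≤ ‖f‖_p^p + (1/(2^{p-1} − 1))·‖g‖_p^p. -/
open MeasureTheory
open scoped ENNReal NNReal

private lemma aux_concave {a b r : ℝ} (hu : 0 ≤ a) (hv : 0 ≤ b) (hr0 : 0 < r) (hr1 : r ≤ 1) :
    a ^ r + b ^ r ≤ 2 * ((a + b) / 2) ^ r := by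
  lift a to ℝ≥0 using hu
  lift b to ℝ≥0 using hv
  have key : (a ^ r + b ^ r : ℝ≥0) ≤ 2 * ((a + b) / 2) ^ r := by
    have hp : (1 : ℝ) ≤ 1 / r := by
      rw [le_div_iff₀ hr0]; simpa using hr1
    have h := NNReal.rpow_arith_mean_le_arith_mean2_rpow (1/2) (1/2) (a ^ r) (b ^ r)
      (by apply NNReal.coe_injective; push_cast; norm_num) hp
    rw [NNReal.rpow_inv_rpow_self hr0.ne', NNReal.rpow_inv_rpow_self hr0.ne'] at h
    have h2 := NNReal.rpow_le_rpow h hr0.le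
    rw [← NNReal.rpow_mul, one_div_mul_cancel hr0.ne', NNReal.rpow_one] at h2
    have e1 : (1/2 : ℝ≥0) * a ^ r + 1/2 * b ^ r = (a ^ r + b ^ r) / 2 := by
      apply NNReal.coe_injective; push_cast; ring
    have e2 : (1/2 : ℝ≥0) * a + 1/2 * b = (a + b) / 2 := by
      apply NNReal.coe_injective; push_cast; ring
    rw [e1, e2] at h2
    calc (a ^ r + b ^ r : ℝ≥0) = 2 * ((a ^ r + b ^ r) / 2) := by
          apply NNReal.coe_injective; push_cast; ring
      _ ≤ 2 * ((a + b) / 2) ^ r := mul_le_mul_right h2 2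
  exact_mod_cast key

private lemma aux_subadd {a b r : ℝ} (hu : 0 ≤ a) (hv : 0 ≤ b) (hr0 : 0 ≤ r) (hr1 : r ≤ 1) :
    (a + b) ^ r ≤ a ^ r + b ^ r := by
  lift a to ℝ≥0 using hu
  lift b to ℝ≥0 using hv
  exact_mod_cast NNReal.rpow_add_le_add_rpow a b hr0 hr1

private lemma two_point {p : ℝ} (hp0 : 0 < p) (hp2 : p ≤ 2) (x y : ℂ) :
    ‖x + y‖ ^ p + ‖x - y‖ ^ p ≤ 2 * ‖x‖ ^ p + 2 * ‖y‖ ^ p := by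
  have hr0 : 0 < p/2 := by linarith
  have hr1 : p/2 ≤ 1 := by linarith
  have hsq : ∀ z : ℂ, ‖z‖ ^ (2:ℝ) = Complex.normSq z := by
    intro z
    rw [show (2:ℝ) = ((2:ℕ):ℝ) by norm_num, Real.rpow_natCast,
      Complex.sq_norm]
  have hpow : ∀ z : ℂ, ‖z‖ ^ p = (‖z‖ ^ (2:ℝ)) ^ (p/2) := by
    intro z
    rw [← Real.rpow_mul (norm_nonneg z)]
    congr 1
    ring
  have par : ‖x+y‖ ^ (2:ℝ) + ‖x-y‖ ^ (2:ℝ) = 2 * (‖x‖^(2:ℝ) + ‖y‖^(2:ℝ)) := by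
    rw [hsq, hsq, hsq, hsq]
    simp only [Complex.normSq_apply, Complex.add_re, Complex.add_im, Complex.sub_re,
      Complex.sub_im]
    ring
  calc ‖x + y‖ ^ p + ‖x - y‖ ^ p
      = (‖x+y‖^(2:ℝ))^(p/2) + (‖x-y‖^(2:ℝ))^(p/2) := by rw [hpow, hpow]
    _ ≤ 2 * ((‖x+y‖^(2:ℝ) + ‖x-y‖^(2:ℝ))/2)^(p/2) :=
        aux_concave (Real.rpow_nonneg (norm_nonneg _) _) (Real.rpow_nonneg (norm_nonneg _) _)
          hr0 hr1
    _ = 2 * (‖x‖^(2:ℝ) + ‖y‖^(2:ℝ))^(p/2) := by rw [par]; ring_nf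
    _ ≤ 2 * ((‖x‖^(2:ℝ))^(p/2) + (‖y‖^(2:ℝ))^(p/2)) := by
        have := aux_subadd (Real.rpow_nonneg (norm_nonneg x) (2:ℝ))
          (Real.rpow_nonneg (norm_nonneg y) (2:ℝ)) hr0.le hr1
        linarith
    _ = 2 * ‖x‖ ^ p + 2 * ‖y‖ ^ p := by rw [← hpow, ← hpow]; ring

/-- Upper Pythagorean inequality for `1 < p ≤ 2`. -/
theorem stmt1 {α : Type*} [MeasurableSpace α] (μ : Measure α) (p : ℝ) (hp1 : 1 < p)
    (hp2 : p ≤ 2) (f g : α → ℂ)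
    (hf : MemLp f (ENNReal.ofReal p) μ) (hg : MemLp g (ENNReal.ofReal p) μ)
    (horth : ∀ β : ℂ, eLpNorm f (ENNReal.ofReal p) μ ≤ eLpNorm (f + β • g) (ENNReal.ofReal p) μ) :
    (eLpNorm (f + g) (ENNReal.ofReal p) μ).toReal ^ p ≤
      (eLpNorm f (ENNReal.ofReal p) μ).toReal ^ p +
        (1 / (2 ^ (p - 1) - 1)) * (eLpNorm g (ENNReal.ofReal p) μ).toReal ^ p := by
  have hp0 : (0:ℝ) < p := by linarith
  set q := ENNReal.ofReal p with hq
  have hq0 : q ≠ 0 := by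
    simp only [hq, ne_eq, ENNReal.ofReal_eq_zero, not_le]; linarith
  have hqt : q ≠ ∞ := ENNReal.ofReal_ne_top
  have hqr : q.toReal = p := ENNReal.toReal_ofReal hp0.le
  -- integrability
  have hInt : ∀ h : α → ℂ, MemLp h q μ → Integrable (fun a => ‖h a‖ ^ p) μ := by
    intro h hh
    have := hh.integrable_norm_rpow hq0 hqt
    rwa [hqr] at this
  have hJnonneg : ∀ h : α → ℂ, 0 ≤ ∫ a, ‖h a‖ ^ p ∂μ := fun h =>
    integral_nonneg fun a => Real.rpow_nonneg (norm_nonneg _) p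
  -- norm to integral
  have norm_eq : ∀ h : α → ℂ, MemLp h q μ →
      (eLpNorm h q μ).toReal ^ p = ∫ a, ‖h a‖ ^ p ∂μ := by
    intro h hh
    rw [hh.eLpNorm_eq_integral_rpow_norm hq0 hqt, hqr,
      ENNReal.toReal_ofReal (Real.rpow_nonneg (hJnonneg h) _)]
    exact Real.rpow_inv_rpow (hJnonneg h) hp0.ne'
  -- integrated two-point inequality
  have key : ∀ u v : α → ℂ, MemLp u q μ → MemLp v q μ →
      (∫ a, ‖u a + v a‖ ^ p ∂μ) + (∫ a, ‖u a - v a‖ ^ p ∂μ) ≤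
        2 * (∫ a, ‖u a‖ ^ p ∂μ) + 2 * (∫ a, ‖v a‖ ^ p ∂μ) := by
    intro u v hu hv
    have h1 : Integrable (fun a => ‖u a + v a‖ ^ p) μ := hInt _ (hu.add hv)
    have h2 : Integrable (fun a => ‖u a - v a‖ ^ p) μ := hInt _ (hu.sub hv)
    have h3 := hInt _ hu
    have h4 := hInt _ hv
    have hmono : ∫ a, (‖u a + v a‖ ^ p + ‖u a - v a‖ ^ p) ∂μ ≤
        ∫ a, (2 * ‖u a‖ ^ p + 2 * ‖v a‖ ^ p) ∂μ := by
      refine integral_mono (h1.add h2) ((h3.const_mul 2).add (h4.const_mul 2)) ?_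
      intro a
      exact two_point hp0 hp2 (u a) (v a)
    rwa [integral_add h1 h2, integral_add (h3.const_mul 2) (h4.const_mul 2),
      integral_const_mul, integral_const_mul] at hmono
  -- the function I
  set I : ℝ → ℝ := fun t => ∫ a, ‖f a + (t:ℂ) * g a‖ ^ p ∂μ with hIdef
  set G : ℝ := ∫ a, ‖g a‖ ^ p ∂μ with hGdef
  have hG : 0 ≤ G := hJnonneg g
  have hMem : ∀ c : ℂ, MemLp (fun a => f a + c * g a) q μ := fun c => hf.add (hg.const_mul c)
  have horth' : ∀ t : ℝ, I 0 ≤ I t := by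
    intro t
    have hm : MemLp (f + (t:ℂ) • g) q μ := hf.add (hg.const_smul _)
    have h := ENNReal.toReal_mono hm.eLpNorm_ne_top (horth (t:ℂ))
    have h2 := Real.rpow_le_rpow ENNReal.toReal_nonneg h hp0.le
    rw [norm_eq f hf, norm_eq _ hm] at h2
    simp only [Pi.add_apply, Pi.smul_apply, smul_eq_mul] at h2
    simp only [hIdef]
    simpa using h2
  have keyI : ∀ s t : ℝ, I s + I t ≤ 2 * I ((s+t)/2) + 2 * |(s-t)/2| ^ p * G := by
    intro s t
    have h := key (fun a => f a + (((s+t)/2 : ℝ):ℂ) * g a) (fun a => (((s-t)/2 : ℝ):ℂ) * g a)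
      (hMem _) (hg.const_mul _)
    have e1 : ∀ a : α, f a + (((s+t)/2 : ℝ):ℂ) * g a + (((s-t)/2 : ℝ):ℂ) * g a
        = f a + (s:ℂ) * g a := by intro a; push_cast; ring
    have e2 : ∀ a : α, f a + (((s+t)/2 : ℝ):ℂ) * g a - (((s-t)/2 : ℝ):ℂ) * g a
        = f a + (t:ℂ) * g a := by intro a; push_cast; ring
    simp only [e1, e2] at h
    have e3 : ∫ a, ‖(((s-t)/2 : ℝ):ℂ) * g a‖ ^ p ∂μ = |(s-t)/2| ^ p * G := by
      simp_rw [norm_mul, Complex.norm_real, Real.norm_eq_abs,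
        Real.mul_rpow (abs_nonneg _) (norm_nonneg _)]
      rw [integral_const_mul, hGdef]
    rw [e3] at h
    simp only [hIdef]
    linarith
  have hsmall : ∀ t : ℝ, I t - I 0 ≤ 2 * |t| ^ p * G := by
    intro t
    have h := keyI t (-t)
    rw [show ((t + -t)/2 : ℝ) = 0 by ring, show ((t - -t)/2 : ℝ) = t by ring] at h
    have := horth' (-t)
    linarith
  have hdouble : ∀ t : ℝ, I (2*t) - I 0 ≤ 2 * (I t - I 0) + 2 * |t| ^ p * G := by
    intro t
    have h := keyI (2*t) 0
    rw [show ((2*t + 0)/2 : ℝ) = t by ring, show ((2*t - 0)/2 : ℝ) = t by ring] at h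
    linarith
  -- r and the power identity
  set r : ℝ := 2 ^ (1 - p) with hr
  have hr0 : 0 < r := Real.rpow_pos_of_pos two_pos _
  have hr1 : r < 1 := Real.rpow_lt_one_of_one_lt_of_neg one_lt_two (by linarith)
  have pow_eq : ∀ n : ℕ, (2:ℝ)^n * ((1/2:ℝ)^n) ^ p = r ^ n := by
    intro n
    have h1 : ((1/2:ℝ)^n : ℝ) = (2:ℝ) ^ (-(n:ℝ)) := by
      rw [Real.rpow_neg (by norm_num), Real.rpow_natCast, one_div, inv_pow]
    rw [h1, ← Real.rpow_natCast 2 n, ← Real.rpow_natCast r n, hr,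
      ← Real.rpow_mul (by norm_num : (0:ℝ) ≤ 2), ← Real.rpow_mul (by norm_num : (0:ℝ) ≤ 2),
      ← Real.rpow_add two_pos]
    congr 1
    ring
  -- iteration
  have titer : ∀ n : ℕ, I 1 - I 0 ≤
      2^n * (I ((1/2:ℝ)^n) - I 0) + (∑ k ∈ Finset.range n, r^(k+1)) * G := by
    intro n
    induction n with
    | zero => simp
    | succ n ih =>
      have hd := hdouble ((1/2:ℝ)^(n+1))
      rw [abs_of_pos (by positivity), show 2 * (1/2:ℝ)^(n+1) = (1/2:ℝ)^n by rw [pow_succ]; ring]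
        at hd
      have h2n : (0:ℝ) ≤ 2^n := by positivity
      have hmul := mul_le_mul_of_nonneg_left hd h2n
      have hpow := pow_eq (n+1)
      have hexp : (2:ℝ)^n * (2 * (I ((1/2:ℝ)^(n+1)) - I 0) + 2 * ((1/2:ℝ)^(n+1)) ^ p * G)
          = 2^(n+1) * (I ((1/2:ℝ)^(n+1)) - I 0) + r^(n+1) * G := by
        rw [← hpow]; ring
      rw [hexp] at hmul
      rw [Finset.sum_range_succ, add_mul]
      linarith
  have hbound : ∀ n : ℕ, I 1 - I 0 ≤ 2 * r^n * G + (r / (1-r)) * G := by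
    intro n
    have h := titer n
    have hs := hsmall ((1/2:ℝ)^n)
    rw [abs_of_pos (by positivity)] at hs
    have h2n : (0:ℝ) ≤ 2^n := by positivity
    have hmul := mul_le_mul_of_nonneg_left hs h2n
    have hexp : (2:ℝ)^n * (2 * ((1/2:ℝ)^n) ^ p * G) = 2 * r^n * G := by
      rw [← pow_eq n]; ring
    rw [hexp] at hmul
    have hsum : (∑ k ∈ Finset.range n, r^(k+1)) ≤ r / (1-r) := by
      have h1 : ∑ k ∈ Finset.range n, r^(k+1) = r * ∑ k ∈ Finset.range n, r^k := by
        rw [Finset.mul_sum]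
        exact Finset.sum_congr rfl fun k _ => by rw [pow_succ]; ring
      have h2 : ∑ k ∈ Finset.range n, r^k ≤ 1/(1-r) := by
        rw [geom_sum_eq hr1.ne,
          show (r^n - 1)/(r-1) = (1 - r^n)/(1-r) by
            rw [← neg_sub (1:ℝ) (r^n), ← neg_sub (1:ℝ) r, neg_div_neg_eq],
          div_le_div_iff₀ (by linarith) (by linarith)]
        have : (0:ℝ) ≤ r^n := by positivity
        nlinarith
      rw [h1, div_eq_mul_one_div]
      exact mul_le_mul_of_nonneg_left h2 hr0.le
    have := mul_le_mul_of_nonneg_right hsum hG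
    linarith
  have hfinal : I 1 - I 0 ≤ (r / (1-r)) * G := by
    have htend : Filter.Tendsto (fun n : ℕ => 2 * r^n * G + (r / (1-r)) * G)
        Filter.atTop (nhds (2 * 0 * G + (r / (1-r)) * G)) := by
      exact ((((tendsto_pow_atTop_nhds_zero_of_lt_one hr0.le hr1).const_mul 2).mul_const
        G).add_const _)
    have := ge_of_tendsto' htend hbound
    simpa using this
  -- the constant
  have hA : (1:ℝ) < 2 ^ (p-1) :=
    Real.one_lt_rpow_iff_of_pos two_pos |>.2 (Or.inl ⟨one_lt_two, by linarith⟩)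
  have hrA : r * 2 ^ (p-1) = 1 := by
    rw [hr, ← Real.rpow_add two_pos]
    norm_num
  have hconst : r / (1-r) = 1 / (2 ^ (p-1) - 1) := by
    rw [div_eq_div_iff (by linarith) (by linarith)]
    linarith [hrA]
  -- assemble
  have e1 : (eLpNorm (f + g) q μ).toReal ^ p = I 1 := by
    rw [norm_eq _ (hf.add hg)]
    simp only [hIdef, Pi.add_apply]
    norm_num
  have e2 : (eLpNorm f q μ).toReal ^ p = I 0 := by
    rw [norm_eq f hf]
    simp only [hIdef]
    norm_num
  have e3 : (eLpNorm g q μ).toReal ^ p = G := norm_eq g hg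
  rw [e1, e2, e3, ← hconst]
  linarith
end

section
/- Let p ∈ (1, 2] and suppose f, g ∈ L^p satisfy f ⊥_p g (Birkhoff–James orthogonality). Then ‖f + g‖_p^2 ≥ ‖f‖_p^2 + (p − 1)·‖g‖_p^2. -/
open MeasureTheory Real Filter
open scoped ENNReal NNReal


/-- derivative helper: `x ↦ (1+x)^q` on `(0,1)` -/
private lemma hasDerivAt_one_add {q x : ℝ} (hx : 0 < 1 + x) :
    HasDerivAt (fun y : ℝ => (1 + y) ^ q) (q * (1 + x) ^ (q - 1)) x := by
  have h1 : HasDerivAt (fun y : ℝ => 1 + y) 1 x := (hasDerivAt_id x).const_add 1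
  have h2 : HasDerivAt (fun y : ℝ => (1 + y) ^ q) (q * (1 + x) ^ (q - 1) * 1) x :=
    (Real.hasDerivAt_rpow_const (p := q) (Or.inl hx.ne')).comp x h1
  simpa using h2

private lemma hasDerivAt_one_sub {q x : ℝ} (hx : 0 < 1 - x) :
    HasDerivAt (fun y : ℝ => (1 - y) ^ q) (-(q * (1 - x) ^ (q - 1))) x := by
  have h1 : HasDerivAt (fun y : ℝ => 1 - y) (-1) x := by
    exact (hasDerivAt_id x).const_sub 1
  have h2 : HasDerivAt (fun y : ℝ => (1 - y) ^ q) (q * (1 - x) ^ (q - 1) * -1) x :=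
    (Real.hasDerivAt_rpow_const (p := q) (Or.inl hx.ne')).comp x h1
  convert h2 using 1
  ring

private lemma cont_rpow {q : ℝ} (hq : 0 < q) : Continuous fun x : ℝ => x ^ q :=
  continuous_iff_continuousAt.2 fun x => Real.continuousAt_rpow_const x q (Or.inr hq.le)

/-- Key convexity fact: `(1+x)^c + (1-x)^c ≥ 2` for `c ≤ 0`, `x ∈ (-1,1)`. -/
private lemma sum_rpow_ge_two {c x : ℝ} (hc : c ≤ 0) (hx1 : 0 < 1 + x) (hx2 : 0 < 1 - x) :
    2 ≤ (1 + x) ^ c + (1 - x) ^ c := by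
  have hab : (1 + x) * (1 - x) ≤ 1 := by nlinarith [sq_nonneg x]
  have habpos : 0 < (1 + x) * (1 - x) := mul_pos hx1 hx2
  have hgm : 1 ≤ ((1 + x) * (1 - x)) ^ (c / 2) :=
    Real.one_le_rpow_of_pos_of_le_one_of_nonpos habpos hab (by linarith)
  have hsq : 0 ≤ ((1 + x) ^ (c / 2) - (1 - x) ^ (c / 2)) ^ 2 := sq_nonneg _
  have e1 : ((1 + x) ^ (c / 2)) ^ 2 = (1 + x) ^ c := by
    rw [← Real.rpow_natCast ((1 + x) ^ (c / 2)) 2, ← Real.rpow_mul hx1.le]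
    norm_num
  have e2 : ((1 - x) ^ (c / 2)) ^ 2 = (1 - x) ^ c := by
    rw [← Real.rpow_natCast ((1 - x) ^ (c / 2)) 2, ← Real.rpow_mul hx2.le]
    norm_num
  have e3 : (1 + x) ^ (c / 2) * (1 - x) ^ (c / 2) = ((1 + x) * (1 - x)) ^ (c / 2) :=
    (Real.mul_rpow hx1.le hx2.le).symm
  nlinarith [hgm, hsq, e1, e2, e3]

/-- L1: `2qt ≤ (1+t)^q - (1-t)^q` for `0 < q ≤ 1`, `t ∈ [0,1]`. -/
private lemma lem1 {q t : ℝ} (hq0 : 0 < q) (hq1 : q ≤ 1) (ht0 : 0 ≤ t) (ht1 : t ≤ 1) :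
    2 * q * t ≤ (1 + t) ^ q - (1 - t) ^ q := by
  set k : ℝ → ℝ := fun x => (1 + x) ^ q - (1 - x) ^ q - 2 * q * x with hk
  have hcont : ContinuousOn k (Set.Icc 0 1) := by
    apply Continuous.continuousOn
    exact (((cont_rpow hq0).comp (continuous_const.add continuous_id)).sub
      ((cont_rpow hq0).comp (continuous_const.sub continuous_id))).sub
      (continuous_const.mul continuous_id)
  have hderiv : ∀ x ∈ Set.Ioo (0:ℝ) 1,
      HasDerivAt k (q * (1 + x) ^ (q - 1) + q * (1 - x) ^ (q - 1) - 2 * q) x := by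
    intro x hx
    have hx1 : 0 < 1 + x := by linarith [hx.1]
    have hx2 : 0 < 1 - x := by linarith [hx.2]
    have : HasDerivAt (fun y : ℝ => (1 + y) ^ q - (1 - y) ^ q - 2 * q * y)
        (q * (1 + x) ^ (q - 1) - -(q * (1 - x) ^ (q - 1)) - 2 * q * 1) x :=
      ((hasDerivAt_one_add (q := q) hx1).sub (hasDerivAt_one_sub (q := q) hx2)).sub
      ((hasDerivAt_id x).const_mul (2 * q))
    convert this using 1
    ring
  have hmono : MonotoneOn k (Set.Icc 0 1) := by
    apply monotoneOn_of_deriv_nonneg (convex_Icc 0 1) hcont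
    · intro x hx
      rw [interior_Icc] at hx
      exact (hderiv x hx).differentiableAt.differentiableWithinAt
    · intro x hx
      rw [interior_Icc] at hx
      rw [(hderiv x hx).deriv]
      have hx1 : 0 < 1 + x := by linarith [hx.1]
      have hx2 : 0 < 1 - x := by linarith [hx.2]
      have := sum_rpow_ge_two (c := q - 1) (by linarith) hx1 hx2
      nlinarith
  have h0 : k 0 = 0 := by simp [hk]
  have := hmono (Set.mem_Icc.2 ⟨le_refl 0, zero_le_one⟩) (Set.mem_Icc.2 ⟨ht0, ht1⟩) ht0
  rw [h0] at this
  simp only [hk] at this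
  linarith

/-- L2: `2 + p(p-1)t² ≤ (1+t)^p + (1-t)^p` for `1 < p ≤ 2`, `t ∈ [0,1]`. -/
private lemma lem2 {p t : ℝ} (hp1 : 1 < p) (hp2 : p ≤ 2) (ht0 : 0 ≤ t) (ht1 : t ≤ 1) :
    2 + p * (p - 1) * t ^ 2 ≤ (1 + t) ^ p + (1 - t) ^ p := by
  have hp0 : 0 < p := by linarith
  set h : ℝ → ℝ := fun x => (1 + x) ^ p + (1 - x) ^ p - 2 - p * (p - 1) * x ^ 2 with hh
  have hcont : ContinuousOn h (Set.Icc 0 1) := by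
    apply Continuous.continuousOn
    exact ((((cont_rpow hp0).comp (continuous_const.add continuous_id)).add
      ((cont_rpow hp0).comp (continuous_const.sub continuous_id))).sub continuous_const).sub
      (continuous_const.mul (continuous_pow 2))
  have hderiv : ∀ x ∈ Set.Ioo (0:ℝ) 1,
      HasDerivAt h (p * (1 + x) ^ (p - 1) - p * (1 - x) ^ (p - 1) - 2 * p * (p - 1) * x) x := by
    intro x hx
    have hx1 : 0 < 1 + x := by linarith [hx.1]
    have hx2 : 0 < 1 - x := by linarith [hx.2]
    have hdq : HasDerivAt (fun y : ℝ => p * (p - 1) * y ^ 2) (p * (p - 1) * (2 * x)) x := by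
      simpa using ((hasDerivAt_pow 2 x).const_mul (p * (p - 1)))
    have : HasDerivAt (fun y : ℝ => (1 + y) ^ p + (1 - y) ^ p - 2 - p * (p - 1) * y ^ 2)
        (p * (1 + x) ^ (p - 1) + -(p * (1 - x) ^ (p - 1)) - 0 - p * (p - 1) * (2 * x)) x :=
      (((hasDerivAt_one_add (q := p) hx1).add (hasDerivAt_one_sub (q := p) hx2)).sub
      (hasDerivAt_const x 2)).sub hdq
    convert this using 1
    ring
  have hmono : MonotoneOn h (Set.Icc 0 1) := by
    apply monotoneOn_of_deriv_nonneg (convex_Icc 0 1) hcont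
    · intro x hx
      rw [interior_Icc] at hx
      exact (hderiv x hx).differentiableAt.differentiableWithinAt
    · intro x hx
      rw [interior_Icc] at hx
      rw [(hderiv x hx).deriv]
      have := lem1 (q := p - 1) (t := x) (by linarith) (by linarith) hx.1.le hx.2.le
      nlinarith
  have h0 : h 0 = 0 := by
    simp only [hh]
    norm_num
  have := hmono (Set.mem_Icc.2 ⟨le_refl 0, zero_le_one⟩) (Set.mem_Icc.2 ⟨ht0, ht1⟩) ht0
  rw [h0] at this
  simp only [hh] at this
  linarith

/-- L4: two-point inequality, normalized form. -/
private lemma lem4 {p t : ℝ} (hp1 : 1 < p) (hp2 : p ≤ 2) (ht0 : 0 ≤ t) (ht1 : t ≤ 1) :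
    (1 + (p - 1) * t ^ 2) ^ (p / 2) ≤ ((1 + t) ^ p + (1 - t) ^ p) / 2 := by
  have hs : (0:ℝ) ≤ (p - 1) * t ^ 2 := by nlinarith
  have hb := rpow_one_add_le_one_add_mul_self (s := (p - 1) * t ^ 2) (by linarith)
    (p := p / 2) (by linarith) (by linarith)
  have h2 := lem2 hp1 hp2 ht0 ht1
  calc (1 + (p - 1) * t ^ 2) ^ (p / 2) ≤ 1 + p / 2 * ((p - 1) * t ^ 2) := hb
    _ ≤ ((1 + t) ^ p + (1 - t) ^ p) / 2 := by nlinarith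


/-- L5: scaled version for `0 ≤ B ≤ A`. -/
private lemma lem5 {p A B : ℝ} (hp1 : 1 < p) (hp2 : p ≤ 2) (hB : 0 ≤ B) (hBA : B ≤ A) :
    ((A + B) ^ 2 + (p - 1) * (A - B) ^ 2) ^ (p / 2) ≤ 2 ^ (p - 1) * (A ^ p + B ^ p) := by
  have hA : 0 ≤ A := hB.trans hBA
  rcases eq_or_lt_of_le hA with h0 | hApos
  · -- A = 0, hence B = 0
    have hB0 : B = 0 := le_antisymm (hBA.trans h0.symm.le) hB
    rw [← h0, hB0]
    norm_num
    rw [Real.zero_rpow (by positivity), Real.zero_rpow (by positivity)]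
    positivity
  · have hs : 0 < A + B := by linarith
    set t : ℝ := (A - B) / (A + B) with htdef
    have ht0 : 0 ≤ t := div_nonneg (by linarith) hs.le
    have ht1 : t ≤ 1 := by
      rw [div_le_one hs]; linarith
    have key := lem4 hp1 hp2 ht0 ht1
    -- multiply by (A+B)^p
    have hsp : (0:ℝ) < (A + B) ^ p := Real.rpow_pos_of_pos hs p
    have e1 : (A + B) ^ p * (1 + (p - 1) * t ^ 2) ^ (p / 2)
        = ((A + B) ^ 2 + (p - 1) * (A - B) ^ 2) ^ (p / 2) := by
      have h1 : (A + B) ^ p = ((A + B) ^ (2:ℝ)) ^ (p / 2) := by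
        rw [← Real.rpow_mul hs.le]; congr 1; ring
      rw [h1, ← Real.mul_rpow (Real.rpow_nonneg hs.le _)
        (by nlinarith [sq_nonneg t] : (0:ℝ) ≤ 1 + (p - 1) * t ^ 2)]
      congr 1
      rw [Real.rpow_two, htdef, div_pow]
      field_simp
    have e2 : (A + B) ^ p * (((1 + t) ^ p + (1 - t) ^ p) / 2) = 2 ^ (p - 1) * (A ^ p + B ^ p) := by
      have h1t : 1 + t = 2 * A / (A + B) := by rw [htdef]; field_simp [hs.ne']; ring
      have h2t : 1 - t = 2 * B / (A + B) := by rw [htdef]; field_simp [hs.ne']; ring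
      rw [h1t, h2t, Real.div_rpow (by positivity) hs.le, Real.div_rpow (by positivity) hs.le,
        Real.mul_rpow (by norm_num) hA, Real.mul_rpow (by norm_num) hB]
      rw [Real.rpow_sub (by norm_num) p 1, Real.rpow_one]
      field_simp
    calc ((A + B) ^ 2 + (p - 1) * (A - B) ^ 2) ^ (p / 2)
        = (A + B) ^ p * (1 + (p - 1) * t ^ 2) ^ (p / 2) := e1.symm
      _ ≤ (A + B) ^ p * (((1 + t) ^ p + (1 - t) ^ p) / 2) := by
          exact mul_le_mul_of_nonneg_left key hsp.le
      _ = 2 ^ (p - 1) * (A ^ p + B ^ p) := e2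

/-- L6: complex two-point inequality. -/
private lemma lem6 {p : ℝ} (hp1 : 1 < p) (hp2 : p ≤ 2) (a b : ℂ) :
    (‖a + b‖ ^ 2 + (p - 1) * ‖a - b‖ ^ 2) ^ (p / 2)
      ≤ 2 ^ (p - 1) * (‖a‖ ^ p + ‖b‖ ^ p) := by
  have hre : (a * (starRingEnd ℂ) b).re ≤ ‖a‖ * ‖b‖ := by
    calc (a * (starRingEnd ℂ) b).re ≤ ‖a * (starRingEnd ℂ) b‖ := Complex.re_le_norm _
      _ = ‖a‖ * ‖b‖ := by rw [norm_mul, Complex.norm_conj]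
  have hplus : ‖a + b‖ ^ 2
      = ‖a‖ ^ 2 + ‖b‖ ^ 2 + 2 * (a * (starRingEnd ℂ) b).re := by
    rw [Complex.sq_norm, Complex.sq_norm, Complex.sq_norm, Complex.normSq_add]
  have hminus : ‖a - b‖ ^ 2
      = ‖a‖ ^ 2 + ‖b‖ ^ 2 - 2 * (a * (starRingEnd ℂ) b).re := by
    rw [Complex.sq_norm, Complex.sq_norm, Complex.sq_norm, Complex.normSq_sub]
  -- reduce to real two-point with A = max, B = min
  rcases le_total (‖b‖) (‖a‖) with hba | hab
  · have key := lem5 hp1 hp2 (norm_nonneg b) hba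
    have h1 : ‖a + b‖ ^ 2 + (p - 1) * ‖a - b‖ ^ 2
        ≤ (‖a‖ + ‖b‖) ^ 2 + (p - 1) * (‖a‖ - ‖b‖) ^ 2 := by
      rw [hplus, hminus]; nlinarith
    have hnn : (0:ℝ) ≤ ‖a + b‖ ^ 2 + (p - 1) * ‖a - b‖ ^ 2 := by
      nlinarith [sq_nonneg (‖a + b‖), sq_nonneg (‖a - b‖)]
    exact le_trans (Real.rpow_le_rpow hnn h1 (by linarith)) key
  · have key := lem5 hp1 hp2 (norm_nonneg a) hab
    have h1 : ‖a + b‖ ^ 2 + (p - 1) * ‖a - b‖ ^ 2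
        ≤ (‖b‖ + ‖a‖) ^ 2 + (p - 1) * (‖b‖ - ‖a‖) ^ 2 := by
      rw [hplus, hminus]; nlinarith
    have hnn : (0:ℝ) ≤ ‖a + b‖ ^ 2 + (p - 1) * ‖a - b‖ ^ 2 := by
      nlinarith [sq_nonneg (‖a + b‖), sq_nonneg (‖a - b‖)]
    refine le_trans (Real.rpow_le_rpow hnn h1 (by linarith)) ?_
    calc ((‖b‖ + ‖a‖) ^ 2 + (p - 1) * (‖b‖ - ‖a‖) ^ 2) ^ (p / 2)
        ≤ 2 ^ (p - 1) * (‖b‖ ^ p + ‖a‖ ^ p) := key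
      _ = 2 ^ (p - 1) * (‖a‖ ^ p + ‖b‖ ^ p) := by ring

private lemma rmR {r L M X Y : ℝ} (hr0 : 0 < r) (hr1 : r ≤ 1) (hL : 0 ≤ L) (hM : 0 ≤ M)
    (hLM : L + M = 1) (hX : 0 ≤ X) (hY : 0 ≤ Y) :
    L ^ (1 - r) * X ^ r + M ^ (1 - r) * Y ^ r ≤ (X + Y) ^ r := by
  rcases eq_or_lt_of_le (by positivity : (0:ℝ) ≤ X + Y) with h0 | hS
  · have hX0 : X = 0 := by linarith
    have hY0 : Y = 0 := by linarith
    rw [hX0, hY0, Real.zero_rpow hr0.ne']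
    simp only [mul_zero, add_zero, zero_add]
    positivity
  · have g1 := Real.geom_mean_le_arith_mean2_weighted hr0.le (by linarith : (0:ℝ) ≤ 1 - r)
      (div_nonneg hX hS.le) hL (by ring)
    have g2 := Real.geom_mean_le_arith_mean2_weighted hr0.le (by linarith : (0:ℝ) ≤ 1 - r)
      (div_nonneg hY hS.le) hM (by ring)
    have eX : X ^ r = (X + Y) ^ r * (X / (X + Y)) ^ r := by
      rw [← Real.mul_rpow hS.le (div_nonneg hX hS.le), mul_div_cancel₀ _ hS.ne']
    have eY : Y ^ r = (X + Y) ^ r * (Y / (X + Y)) ^ r := by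
      rw [← Real.mul_rpow hS.le (div_nonneg hY hS.le), mul_div_cancel₀ _ hS.ne']
    have hSr : (0:ℝ) ≤ (X + Y) ^ r := Real.rpow_nonneg hS.le r
    calc L ^ (1 - r) * X ^ r + M ^ (1 - r) * Y ^ r
        = (X + Y) ^ r * ((X / (X + Y)) ^ r * L ^ (1 - r) + (Y / (X + Y)) ^ r * M ^ (1 - r)) := by
          rw [eX, eY]; ring
      _ ≤ (X + Y) ^ r * ((r * (X / (X + Y)) + (1 - r) * L) + (r * (Y / (X + Y)) + (1 - r) * M)) :=
          mul_le_mul_of_nonneg_left (add_le_add g1 g2) hSr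
      _ = (X + Y) ^ r * (r * ((X + Y) / (X + Y)) + (1 - r) * (L + M)) := by ring
      _ = (X + Y) ^ r := by rw [div_self hS.ne', hLM]; ring

private lemma rmE {r : ℝ} (hr0 : 0 < r) (hr1 : r ≤ 1) {l m : ℝ≥0∞} (hlm : l + m = 1)
    (x y : ℝ≥0∞) : l ^ (1 - r) * x ^ r + m ^ (1 - r) * y ^ r ≤ (x + y) ^ r := by
  have hl : l ≠ ⊤ := by
    intro h; rw [h] at hlm; simp at hlm
  have hm : m ≠ ⊤ := by
    intro h; rw [h] at hlm; simp [add_comm] at hlm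
  rcases eq_or_ne x ⊤ with rfl | hx
  · have : (⊤ + y : ℝ≥0∞) ^ r = ⊤ := by
      rw [top_add]; exact ENNReal.top_rpow_of_pos hr0
    rw [this]; exact le_top
  rcases eq_or_ne y ⊤ with rfl | hy
  · have : (x + ⊤ : ℝ≥0∞) ^ r = ⊤ := by
      rw [add_top]; exact ENNReal.top_rpow_of_pos hr0
    rw [this]; exact le_top
  lift x to ℝ≥0 using hx
  lift y to ℝ≥0 using hy
  lift l to ℝ≥0 using hl
  lift m to ℝ≥0 using hm
  rw [← ENNReal.coe_rpow_of_nonneg _ (by linarith : (0:ℝ) ≤ 1 - r),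
    ← ENNReal.coe_rpow_of_nonneg _ hr0.le,
    ← ENNReal.coe_rpow_of_nonneg _ (by linarith : (0:ℝ) ≤ 1 - r),
    ← ENNReal.coe_rpow_of_nonneg _ hr0.le, ← ENNReal.coe_add,
    ← ENNReal.coe_rpow_of_nonneg _ hr0.le, ← ENNReal.coe_mul, ← ENNReal.coe_mul,
    ← ENNReal.coe_add, ENNReal.coe_le_coe, ← NNReal.coe_le_coe]
  push_cast
  have hlm' : (l : ℝ) + (m : ℝ) = 1 := by
    have := congrArg ENNReal.toReal hlm
    rw [ENNReal.toReal_add ENNReal.coe_ne_top ENNReal.coe_ne_top] at this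
    simpa using this
  exact rmR hr0 hr1 l.coe_nonneg m.coe_nonneg hlm' x.coe_nonneg y.coe_nonneg

private lemma rmInt {α : Type*} [MeasurableSpace α] {μ : Measure α} {r : ℝ}
    (hr0 : 0 < r) (hr1 : r ≤ 1) {U V : α → ℝ≥0∞}
    (hU : AEMeasurable U μ) (hV : AEMeasurable V μ) :
    (∫⁻ a, U a ^ r ∂μ) ^ (1/r) + (∫⁻ a, V a ^ r ∂μ) ^ (1/r)
      ≤ (∫⁻ a, (U a + V a) ^ r ∂μ) ^ (1/r) := by
  set IU := ∫⁻ a, U a ^ r ∂μ with hIU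
  set IV := ∫⁻ a, V a ^ r ∂μ with hIV
  set IS := ∫⁻ a, (U a + V a) ^ r ∂μ with hIS
  have hmU : IU ≤ IS := lintegral_mono fun a => ENNReal.rpow_le_rpow le_self_add hr0.le
  have hmV : IV ≤ IS := lintegral_mono fun a => ENNReal.rpow_le_rpow le_add_self hr0.le
  have hrinv : (0:ℝ) < 1/r := by positivity
  rcases eq_or_ne IU ⊤ with htop | hUfin
  · have : IS = ⊤ := top_le_iff.mp (htop ▸ hmU)
    rw [this, ENNReal.top_rpow_of_pos hrinv]
    exact le_top
  rcases eq_or_ne IV ⊤ with htop | hVfin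
  · have : IS = ⊤ := top_le_iff.mp (htop ▸ hmV)
    rw [this, ENNReal.top_rpow_of_pos hrinv]
    exact le_top
  set A := IU ^ (1/r) with hA
  set B := IV ^ (1/r) with hB
  have hAfin : A ≠ ⊤ := by
    rw [hA]; exact (ENNReal.rpow_lt_top_of_nonneg hrinv.le hUfin).ne
  have hBfin : B ≠ ⊤ := by
    rw [hB]; exact (ENNReal.rpow_lt_top_of_nonneg hrinv.le hVfin).ne
  have hArp : A ^ r = IU := by
    rw [hA, ← ENNReal.rpow_mul, one_div, inv_mul_cancel₀ hr0.ne', ENNReal.rpow_one]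
  have hBrp : B ^ r = IV := by
    rw [hB, ← ENNReal.rpow_mul, one_div, inv_mul_cancel₀ hr0.ne', ENNReal.rpow_one]
  rcases eq_or_ne A 0 with hA0 | hApos
  · rw [hA0, zero_add]
    exact ENNReal.rpow_le_rpow hmV hrinv.le
  rcases eq_or_ne B 0 with hB0 | hBpos
  · rw [hB0, add_zero]
    exact ENNReal.rpow_le_rpow hmU hrinv.le
  -- main case
  have hABfin : A + B ≠ ⊤ := by
    simp [ENNReal.add_ne_top, hAfin, hBfin]
  have hABpos : A + B ≠ 0 := by
    simp [hApos, hBpos]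
  set l := A / (A + B) with hl
  set m := B / (A + B) with hm
  have hlm : l + m = 1 := by
    rw [hl, hm, ENNReal.div_add_div_same, ENNReal.div_self hABpos hABfin]
  have hpt : ∀ a, l ^ (1-r) * U a ^ r + m ^ (1-r) * V a ^ r ≤ (U a + V a) ^ r :=
    fun a => rmE hr0 hr1 hlm (U a) (V a)
  have hUr : AEMeasurable (fun a => U a ^ r) μ :=
    ENNReal.continuous_rpow_const.measurable.comp_aemeasurable hU
  have hVr : AEMeasurable (fun a => V a ^ r) μ :=
    ENNReal.continuous_rpow_const.measurable.comp_aemeasurable hV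
  have hint : l ^ (1-r) * IU + m ^ (1-r) * IV ≤ IS := by
    calc l ^ (1-r) * IU + m ^ (1-r) * IV
        = ∫⁻ a, (l ^ (1-r) * U a ^ r + m ^ (1-r) * V a ^ r) ∂μ := by
          rw [lintegral_add_left' (hUr.const_mul _), lintegral_const_mul'' _ hUr,
            lintegral_const_mul'' _ hVr]
      _ ≤ IS := lintegral_mono hpt
  have hkey : (A + B) ^ r ≤ IS := by
    have h1r : (0:ℝ) ≤ 1 - r := by linarith
    have hd : ((A+B) : ℝ≥0∞) ^ (1-r) ≠ 0 :=
      (ENNReal.rpow_pos (zero_lt_iff.mpr hABpos) hABfin).ne'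
    have hd' : ((A+B) : ℝ≥0∞) ^ (1-r) ≠ ⊤ :=
      (ENNReal.rpow_lt_top_of_nonneg h1r hABfin).ne
    have eA : l ^ (1-r) * A ^ r = A / (A+B) ^ (1-r) := by
      rw [hl, ENNReal.div_rpow_of_nonneg _ _ h1r, div_eq_mul_inv, div_eq_mul_inv, mul_right_comm,
        ← ENNReal.rpow_add _ _ hApos hAfin, sub_add_cancel, ENNReal.rpow_one]
    have eB : m ^ (1-r) * B ^ r = B / (A+B) ^ (1-r) := by
      rw [hm, ENNReal.div_rpow_of_nonneg _ _ h1r, div_eq_mul_inv, div_eq_mul_inv, mul_right_comm,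
        ← ENNReal.rpow_add _ _ hBpos hBfin, sub_add_cancel, ENNReal.rpow_one]
    have hABr : (A + B) ^ r = l ^ (1-r) * A ^ r + m ^ (1-r) * B ^ r := by
      rw [eA, eB, ENNReal.div_add_div_same, ENNReal.eq_div_iff hd hd',
        ← ENNReal.rpow_add _ _ hABpos hABfin]
      norm_num
    calc (A + B) ^ r = l ^ (1-r) * IU + m ^ (1-r) * IV := by rw [hABr, hArp, hBrp]
      _ ≤ IS := hint
  have hfin : A + B = ((A + B) ^ r) ^ (1/r) := by
    rw [← ENNReal.rpow_mul, mul_one_div, div_self hr0.ne', ENNReal.rpow_one]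
  rw [hfin]
  exact ENNReal.rpow_le_rpow hkey hrinv.le



/-- pointwise two-point inequality in `ℝ≥0∞` form -/
private lemma lem6e {p : ℝ} (hp1 : 1 < p) (hp2 : p ≤ 2) (a b : ℂ) :
    ((‖a + b‖₊ : ℝ≥0∞) ^ (2:ℝ) + ENNReal.ofReal (p - 1) * (‖a - b‖₊ : ℝ≥0∞) ^ (2:ℝ)) ^ (p/2)
      ≤ ENNReal.ofReal (2 ^ (p - 1)) * ((‖a‖₊ : ℝ≥0∞) ^ p + (‖b‖₊ : ℝ≥0∞) ^ p) := by
  have hco : ∀ (z : ℂ) (q : ℝ), 0 ≤ q → (‖z‖₊ : ℝ≥0∞) ^ q = ENNReal.ofReal (‖z‖ ^ q) := by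
    intro z q hq
    rw [← enorm_eq_nnnorm, ← ofReal_norm_eq_enorm, ENNReal.ofReal_rpow_of_nonneg (norm_nonneg z) hq]
  have hn1 : (0:ℝ) ≤ ‖a + b‖ ^ (2:ℝ) := Real.rpow_nonneg (norm_nonneg _) _
  have hn2 : (0:ℝ) ≤ (p - 1) * ‖a - b‖ ^ (2:ℝ) :=
    mul_nonneg (by linarith) (Real.rpow_nonneg (norm_nonneg _) _)
  have hn3 : (0:ℝ) ≤ ‖a‖ ^ p := Real.rpow_nonneg (norm_nonneg _) _
  have hn4 : (0:ℝ) ≤ ‖b‖ ^ p := Real.rpow_nonneg (norm_nonneg _) _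
  rw [hco _ _ (by norm_num : (0:ℝ) ≤ 2), hco _ _ (by norm_num : (0:ℝ) ≤ 2),
    hco _ _ (by linarith : (0:ℝ) ≤ p), hco _ _ (by linarith : (0:ℝ) ≤ p),
    ← ENNReal.ofReal_mul (by linarith), ← ENNReal.ofReal_add hn1 hn2,
    ← ENNReal.ofReal_add hn3 hn4,
    ← ENNReal.ofReal_mul (by positivity),
    ENNReal.ofReal_rpow_of_nonneg (by linarith : (0:ℝ) ≤ _) (by positivity)]
  apply ENNReal.ofReal_le_ofReal
  calc (‖a + b‖ ^ (2:ℝ) + (p - 1) * ‖a - b‖ ^ (2:ℝ)) ^ (p / 2)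
      = (‖a + b‖ ^ 2 + (p - 1) * ‖a - b‖ ^ 2) ^ (p / 2) := by
        rw [Real.rpow_two, Real.rpow_two]
    _ ≤ 2 ^ (p - 1) * (‖a‖ ^ p + ‖b‖ ^ p) := lem6 hp1 hp2 a b

set_option maxHeartbeats 1000000 in
/-- BCL parallelogram inequality in `Lp`, `1 < p ≤ 2`, ENNReal form. -/
private lemma bclE {α : Type*} [MeasurableSpace α] {μ : Measure α} {p : ℝ}
    (hp1 : 1 < p) (hp2 : p ≤ 2) {x y : α → ℂ}
    (hx : AEStronglyMeasurable x μ) (hy : AEStronglyMeasurable y μ) :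
    eLpNorm (x + y) (ENNReal.ofReal p) μ ^ (2:ℝ)
      + ENNReal.ofReal (p - 1) * eLpNorm (x - y) (ENNReal.ofReal p) μ ^ (2:ℝ)
      ≤ 2 * (eLpNorm x (ENNReal.ofReal p) μ ^ (2:ℝ) + eLpNorm y (ENNReal.ofReal p) μ ^ (2:ℝ)) := by
  have hp0 : (0:ℝ) < p := by linarith
  set P : ℝ≥0∞ := ENNReal.ofReal p with hP
  have hP0 : P ≠ 0 := by simp [hP, ENNReal.ofReal_pos, hp0]
  have hPt : P ≠ ⊤ := ENNReal.ofReal_ne_top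
  have hPto : P.toReal = p := ENNReal.toReal_ofReal hp0.le
  have hE : ∀ h : α → ℂ, eLpNorm h P μ
      = (∫⁻ a, (‖h a‖₊ : ℝ≥0∞) ^ p ∂μ) ^ (1/p) := by
    intro h
    rw [eLpNorm_eq_lintegral_rpow_enorm_toReal hP0 hPt, hPto]
    rfl
  set r : ℝ := p / 2 with hr
  have hr0 : 0 < r := by positivity
  have hr1 : r ≤ 1 := by rw [hr]; linarith
  set U : α → ℝ≥0∞ := fun a => (‖(x + y) a‖₊ : ℝ≥0∞) ^ (2:ℝ) with hUdef
  set V : α → ℝ≥0∞ := fun a => ENNReal.ofReal (p - 1) * (‖(x - y) a‖₊ : ℝ≥0∞) ^ (2:ℝ) with hVdef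
  have hU : AEMeasurable U μ :=
    ENNReal.continuous_rpow_const.measurable.comp_aemeasurable (hx.add hy).enorm
  have hV : AEMeasurable V μ :=
    (ENNReal.continuous_rpow_const.measurable.comp_aemeasurable (hx.sub hy).enorm).const_mul _
  have hUr : ∀ a, U a ^ r = (‖(x + y) a‖₊ : ℝ≥0∞) ^ p := by
    intro a
    rw [hUdef, ← ENNReal.rpow_mul]
    congr 1
    rw [hr]; ring
  have hVr : ∀ a, V a ^ r = ENNReal.ofReal (p - 1) ^ r * (‖(x - y) a‖₊ : ℝ≥0∞) ^ p := by
    intro a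
    rw [hVdef, ENNReal.mul_rpow_of_nonneg _ _ hr0.le, ← ENNReal.rpow_mul]
    congr 1
    rw [hr]; ring
  have key1 : (∫⁻ a, U a ^ r ∂μ) ^ (1/r) = eLpNorm (x + y) P μ ^ (2:ℝ) := by
    simp only [hUr]
    rw [hE, ← ENNReal.rpow_mul]
    congr 1
    rw [hr]
    field_simp
  have hcfin : ENNReal.ofReal (p-1) ^ r ≠ ⊤ := by
    exact (ENNReal.rpow_lt_top_of_nonneg hr0.le ENNReal.ofReal_ne_top).ne
  have hmxy : AEMeasurable (fun a => (‖(x - y) a‖₊ : ℝ≥0∞) ^ p) μ :=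
    ENNReal.continuous_rpow_const.measurable.comp_aemeasurable (hx.sub hy).enorm
  have hmx : AEMeasurable (fun a => (‖x a‖₊ : ℝ≥0∞) ^ p) μ :=
    ENNReal.continuous_rpow_const.measurable.comp_aemeasurable hx.enorm
  have hmy : AEMeasurable (fun a => (‖y a‖₊ : ℝ≥0∞) ^ p) μ :=
    ENNReal.continuous_rpow_const.measurable.comp_aemeasurable hy.enorm
  have key2 : (∫⁻ a, V a ^ r ∂μ) ^ (1/r)
      = ENNReal.ofReal (p - 1) * eLpNorm (x - y) P μ ^ (2:ℝ) := by
    simp only [hVr]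
    rw [lintegral_const_mul'' _ hmxy, ENNReal.mul_rpow_of_nonneg _ _ (by positivity : (0:ℝ) ≤ 1/r),
      ← ENNReal.rpow_mul, mul_one_div, div_self hr0.ne', ENNReal.rpow_one,
      hE, ← ENNReal.rpow_mul]
    congr 2
    rw [hr]
    field_simp
  have key3 : ∀ a, (U a + V a) ^ r
      ≤ ENNReal.ofReal (2 ^ (p - 1)) * ((‖x a‖₊ : ℝ≥0∞) ^ p + (‖y a‖₊ : ℝ≥0∞) ^ p) := by
    intro a
    have := lem6e hp1 hp2 (x a) (y a)
    simpa [hUdef, hVdef, hr] using this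
  have step1 : eLpNorm (x + y) P μ ^ (2:ℝ) + ENNReal.ofReal (p - 1) * eLpNorm (x - y) P μ ^ (2:ℝ)
      ≤ (∫⁻ a, (U a + V a) ^ r ∂μ) ^ (1/r) := by
    rw [← key1, ← key2]
    exact rmInt hr0 hr1 hU hV
  have step2 : (∫⁻ a, (U a + V a) ^ r ∂μ)
      ≤ ENNReal.ofReal (2 ^ (p - 1)) * ((∫⁻ a, (‖x a‖₊ : ℝ≥0∞) ^ p ∂μ) + ∫⁻ a, (‖y a‖₊ : ℝ≥0∞) ^ p ∂μ) := by
    calc (∫⁻ a, (U a + V a) ^ r ∂μ)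
        ≤ ∫⁻ a, ENNReal.ofReal (2 ^ (p - 1)) * ((‖x a‖₊ : ℝ≥0∞) ^ p + (‖y a‖₊ : ℝ≥0∞) ^ p) ∂μ :=
          lintegral_mono key3
      _ = ENNReal.ofReal (2 ^ (p - 1)) * ((∫⁻ a, (‖x a‖₊ : ℝ≥0∞) ^ p ∂μ) + ∫⁻ a, (‖y a‖₊ : ℝ≥0∞) ^ p ∂μ) := by
          rw [lintegral_const_mul'' (f := fun a => (‖x a‖₊ : ℝ≥0∞) ^ p + (‖y a‖₊ : ℝ≥0∞) ^ p) _ (hmx.add hmy), lintegral_add_left' hmx]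
  -- identify integrals with eLpNorm powers
  have hIx : (∫⁻ a, (‖x a‖₊ : ℝ≥0∞) ^ p ∂μ) = eLpNorm x P μ ^ p := by
    rw [hE, ← ENNReal.rpow_mul, one_div, inv_mul_cancel₀ hp0.ne', ENNReal.rpow_one]
  have hIy : (∫⁻ a, (‖y a‖₊ : ℝ≥0∞) ^ p ∂μ) = eLpNorm y P μ ^ p := by
    rw [hE, ← ENNReal.rpow_mul, one_div, inv_mul_cancel₀ hp0.ne', ENNReal.rpow_one]
  have hs : (1:ℝ) ≤ 2/p := by
    rw [le_div_iff₀ hp0]; linarith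
  have pm := ENNReal.rpow_add_le_mul_rpow_add_rpow (eLpNorm x P μ ^ p) (eLpNorm y P μ ^ p) hs
  -- pm : (Ex^p + Ey^p)^(2/p) ≤ 2^(2/p-1) * ((Ex^p)^(2/p) + (Ey^p)^(2/p))
  have hxs : (eLpNorm x P μ ^ p) ^ (2/p : ℝ) = eLpNorm x P μ ^ (2:ℝ) := by
    rw [← ENNReal.rpow_mul]
    congr 1
    field_simp
  have hys : (eLpNorm y P μ ^ p) ^ (2/p : ℝ) = eLpNorm y P μ ^ (2:ℝ) := by
    rw [← ENNReal.rpow_mul]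
    congr 1
    field_simp
  have hconst : ENNReal.ofReal (2 ^ (p - 1)) ^ (1/r : ℝ) * (2:ℝ≥0∞) ^ (2/p - 1 : ℝ) = 2 := by
    have h2 : ENNReal.ofReal ((2:ℝ) ^ (p - 1)) = (2:ℝ≥0∞) ^ (p - 1 : ℝ) := by
      rw [← ENNReal.ofReal_rpow_of_pos (by norm_num : (0:ℝ) < 2)]
      norm_num
    rw [h2, ← ENNReal.rpow_mul, ← ENNReal.rpow_add _ _ (by norm_num) (by norm_num)]
    have : (p - 1) * (1/r) + (2/p - 1) = 1 := by
      rw [hr]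
      field_simp
      ring
    rw [this, ENNReal.rpow_one]
  calc eLpNorm (x + y) P μ ^ (2:ℝ) + ENNReal.ofReal (p - 1) * eLpNorm (x - y) P μ ^ (2:ℝ)
      ≤ (∫⁻ a, (U a + V a) ^ r ∂μ) ^ (1/r) := step1
    _ ≤ (ENNReal.ofReal (2 ^ (p - 1)) * (eLpNorm x P μ ^ p + eLpNorm y P μ ^ p)) ^ (1/r) := by
        rw [← hIx, ← hIy]
        exact ENNReal.rpow_le_rpow step2 (by positivity)
    _ = ENNReal.ofReal (2 ^ (p - 1)) ^ (1/r : ℝ)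
          * (eLpNorm x P μ ^ p + eLpNorm y P μ ^ p) ^ (2/p : ℝ) := by
        rw [ENNReal.mul_rpow_of_nonneg _ _ (by positivity : (0:ℝ) ≤ 1/r)]
        congr 2
        rw [hr, one_div_div]
    _ ≤ ENNReal.ofReal (2 ^ (p - 1)) ^ (1/r : ℝ)
          * ((2:ℝ≥0∞) ^ (2/p - 1 : ℝ) * (eLpNorm x P μ ^ (2:ℝ) + eLpNorm y P μ ^ (2:ℝ))) := by
        apply mul_le_mul_right
        rw [← hxs, ← hys]
        exact pm
    _ = 2 * (eLpNorm x P μ ^ (2:ℝ) + eLpNorm y P μ ^ (2:ℝ)) := by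
        rw [← mul_assoc, hconst]


/-- BCL inequality, real (toReal) form. -/
private lemma bclR {α : Type*} [MeasurableSpace α] {μ : Measure α} {p : ℝ}
    (hp1 : 1 < p) (hp2 : p ≤ 2) {x y : α → ℂ}
    (hx : MemLp x (ENNReal.ofReal p) μ) (hy : MemLp y (ENNReal.ofReal p) μ) :
    (eLpNorm (x + y) (ENNReal.ofReal p) μ).toReal ^ 2
      + (p - 1) * (eLpNorm (x - y) (ENNReal.ofReal p) μ).toReal ^ 2
      ≤ 2 * ((eLpNorm x (ENNReal.ofReal p) μ).toReal ^ 2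
          + (eLpNorm y (ENNReal.ofReal p) μ).toReal ^ 2) := by
  have h := bclE hp1 hp2 hx.1 hy.1
  set P := ENNReal.ofReal p
  have e2 : ∀ z : ℝ≥0∞, (z ^ (2:ℝ)).toReal = z.toReal ^ 2 := by
    intro z
    rw [← ENNReal.toReal_rpow, Real.rpow_two]
  have hxf : eLpNorm x P μ ^ (2:ℝ) ≠ ⊤ :=
    (ENNReal.rpow_lt_top_of_nonneg (by norm_num) hx.eLpNorm_ne_top).ne
  have hyf : eLpNorm y P μ ^ (2:ℝ) ≠ ⊤ :=
    (ENNReal.rpow_lt_top_of_nonneg (by norm_num) hy.eLpNorm_ne_top).ne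
  have hxyf : eLpNorm (x + y) P μ ^ (2:ℝ) ≠ ⊤ :=
    (ENNReal.rpow_lt_top_of_nonneg (by norm_num) (hx.add hy).eLpNorm_ne_top).ne
  have hxyf' : eLpNorm (x - y) P μ ^ (2:ℝ) ≠ ⊤ :=
    (ENNReal.rpow_lt_top_of_nonneg (by norm_num) (hx.sub hy).eLpNorm_ne_top).ne
  have hrhs : 2 * (eLpNorm x P μ ^ (2:ℝ) + eLpNorm y P μ ^ (2:ℝ)) ≠ ⊤ :=
    ENNReal.mul_ne_top (by norm_num) (ENNReal.add_ne_top.mpr ⟨hxf, hyf⟩)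
  have := ENNReal.toReal_mono hrhs h
  rw [ENNReal.toReal_add hxyf (ENNReal.mul_ne_top ENNReal.ofReal_ne_top hxyf'),
    ENNReal.toReal_mul, ENNReal.toReal_mul,
    ENNReal.toReal_add hxf hyf, e2, e2, e2, e2,
    ENNReal.toReal_ofReal (by linarith : (0:ℝ) ≤ p - 1)] at this
  simpa using this

/-- Lower Pythagorean inequality for `1 < p ≤ 2`. -/
theorem stmt2 {α : Type*} [MeasurableSpace α] (μ : Measure α) (p : ℝ) (hp1 : 1 < p)
    (hp2 : p ≤ 2) (f g : α → ℂ)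
    (hf : MemLp f (ENNReal.ofReal p) μ) (hg : MemLp g (ENNReal.ofReal p) μ)
    (horth : ∀ β : ℂ, eLpNorm f (ENNReal.ofReal p) μ ≤ eLpNorm (f + β • g) (ENNReal.ofReal p) μ) :
    (eLpNorm f (ENNReal.ofReal p) μ).toReal ^ 2 +
        (p - 1) * (eLpNorm g (ENNReal.ofReal p) μ).toReal ^ 2 ≤
      (eLpNorm (f + g) (ENNReal.ofReal p) μ).toReal ^ 2 := by
  set P := ENNReal.ofReal p with hPdef
  set N : (α → ℂ) → ℝ := fun h => (eLpNorm h P μ).toReal with hN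
  have hmem : ∀ β : ℂ, MemLp (f + β • g) P μ := fun β => hf.add (hg.const_smul β)
  set φ : ℝ → ℝ := fun t => N (f + (t:ℂ) • g) ^ 2 with hφ
  set K : ℝ := N g ^ 2 with hK
  set c : ℝ := (p - 1) * K with hc
  have hc0 : 0 ≤ c := mul_nonneg (by linarith) (sq_nonneg _)
  have hφ0 : φ 0 = N f ^ 2 := by
    simp only [hφ, Complex.ofReal_zero, zero_smul, add_zero]
  have hNnn : ∀ h, 0 ≤ N h := fun h => ENNReal.toReal_nonneg
  have hlow : ∀ t : ℝ, φ 0 ≤ φ t := by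
    intro t
    rw [hφ0]
    have h1 : N f ≤ N (f + ((t:ℝ):ℂ) • g) :=
      ENNReal.toReal_mono (hmem _).eLpNorm_ne_top (horth _)
    exact pow_le_pow_left₀ (hNnn f) h1 2
  -- midpoint inequality
  have hmid : ∀ s : ℝ, 2 * φ s + 2 * c * s ^ 2 ≤ φ 0 + φ (2 * s) := by
    intro s
    have hx := hf
    have hy := hmem ((2*s : ℝ) : ℂ)
    have hbcl := bclR hp1 hp2 hx hy
    have exy : f + (f + (((2*s : ℝ)) : ℂ) • g) = (2:ℂ) • (f + ((s:ℝ):ℂ) • g) := by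
      funext a
      simp only [Pi.add_apply, Pi.smul_apply, smul_eq_mul]
      push_cast
      ring
    have exy' : f - (f + (((2*s : ℝ)) : ℂ) • g) = -((((2*s : ℝ)) : ℂ) • g) := by
      funext a
      simp only [Pi.sub_apply, Pi.add_apply, Pi.smul_apply, Pi.neg_apply, smul_eq_mul]
      ring
    have n1 : N (f + (f + (((2*s : ℝ)) : ℂ) • g)) = 2 * N (f + ((s:ℝ):ℂ) • g) := by
      rw [hN]
      simp only [exy]
      rw [eLpNorm_const_smul]
      simp [ENNReal.toReal_mul]
    have n2 : N (f - (f + (((2*s : ℝ)) : ℂ) • g)) = 2 * |s| * N g := by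
      rw [hN]
      simp only [exy']
      rw [eLpNorm_neg, eLpNorm_const_smul, ENNReal.toReal_mul]
      congr 1
      rw [toReal_enorm, Complex.norm_real, Real.norm_eq_abs, abs_mul, abs_two]
    have hbcl' : N (f + (f + (((2*s : ℝ)) : ℂ) • g)) ^ 2
        + (p - 1) * N (f - (f + (((2*s : ℝ)) : ℂ) • g)) ^ 2
        ≤ 2 * (N f ^ 2 + N (f + (((2*s : ℝ)) : ℂ) • g) ^ 2) := hbcl
    rw [n1, n2] at hbcl'
    have expand : (2 * N (f + ((s:ℝ):ℂ) • g)) ^ 2 = 4 * φ s := by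
      rw [hφ]; ring
    have expand2 : (2 * |s| * N g) ^ 2 = 4 * s ^ 2 * K := by
      rw [hK, mul_pow, mul_pow, sq_abs]; ring
    rw [expand, expand2] at hbcl'
    have e0 : N f ^ 2 = φ 0 := hφ0.symm
    rw [e0] at hbcl'
    have e1 : N (f + (((2*s:ℝ)) : ℂ) • g) ^ 2 = φ (2*s) := rfl
    rw [e1] at hbcl'
    rw [hc]
    nlinarith [hbcl']
  -- dyadic iteration
  set ψ : ℝ → ℝ := fun t => φ t - c * t ^ 2 with hψ
  have hmidψ : ∀ s : ℝ, 2 * ψ s ≤ ψ 0 + ψ (2 * s) := by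
    intro s
    have := hmid s
    simp only [hψ]
    nlinarith
  have ind : ∀ n : ℕ, (2:ℝ) ^ n * (ψ ((1/2) ^ n) - ψ 0) ≤ ψ 1 - ψ 0 := by
    intro n
    induction n with
    | zero => simp
    | succ n ih =>
      have hs := hmidψ ((1/2:ℝ) ^ (n+1))
      have h2s : 2 * (1/2:ℝ) ^ (n+1) = (1/2:ℝ) ^ n := by
        rw [pow_succ]
        ring
      rw [h2s] at hs
      have h2n : (0:ℝ) ≤ 2 ^ n := by positivity
      calc (2:ℝ) ^ (n+1) * (ψ ((1/2) ^ (n+1)) - ψ 0)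
          = 2 ^ n * (2 * ψ ((1/2) ^ (n+1)) - 2 * ψ 0) := by rw [pow_succ]; ring
        _ ≤ 2 ^ n * (ψ ((1/2) ^ n) - ψ 0) := by
            apply mul_le_mul_of_nonneg_left _ h2n
            linarith
        _ ≤ ψ 1 - ψ 0 := ih
  have bound : ∀ n : ℕ, -(c * (1/2:ℝ) ^ n) ≤ ψ 1 - ψ 0 := by
    intro n
    have h1 : ψ 0 = φ 0 := by simp [hψ]
    have h2 : ψ ((1/2:ℝ) ^ n) - ψ 0 ≥ -(c * ((1/2:ℝ) ^ n) ^ 2) := by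
      simp only [hψ, h1]
      have := hlow ((1/2:ℝ) ^ n)
      nlinarith [hlow ((1/2:ℝ) ^ n)]
    have h3 := ind n
    have h4 : (2:ℝ) ^ n * -(c * ((1/2:ℝ) ^ n) ^ 2) = -(c * (1/2:ℝ) ^ n) := by
      have : (2:ℝ) ^ n * ((1/2:ℝ) ^ n * (1/2:ℝ) ^ n) = (1/2:ℝ) ^ n := by
        rw [← mul_assoc, ← mul_pow]
        norm_num
      nlinarith [this]
    calc -(c * (1/2:ℝ) ^ n) = (2:ℝ) ^ n * -(c * ((1/2:ℝ) ^ n) ^ 2) := h4.symm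
      _ ≤ (2:ℝ) ^ n * (ψ ((1/2) ^ n) - ψ 0) := by
          apply mul_le_mul_of_nonneg_left h2 (by positivity)
      _ ≤ ψ 1 - ψ 0 := h3
  have htend : Tendsto (fun n : ℕ => -(c * (1/2:ℝ) ^ n)) atTop (nhds 0) := by
    have h1 : Tendsto (fun n : ℕ => (1/2:ℝ) ^ n) atTop (nhds 0) :=
      tendsto_pow_atTop_nhds_zero_of_lt_one (by norm_num) (by norm_num)
    have h2 := (h1.const_mul c).neg
    simpa using h2
  have hfinal : (0:ℝ) ≤ ψ 1 - ψ 0 := le_of_tendsto' htend bound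
  -- unfold
  have hψ1 : ψ 1 = φ 1 - c := by simp [hψ]
  have hψ0 : ψ 0 = φ 0 := by simp [hψ]
  have hφ1 : φ 1 = N (f + g) ^ 2 := by
    simp only [hφ, Complex.ofReal_one, one_smul]
  rw [hψ1, hψ0, hφ1, hφ0] at hfinal
  simp only [hN] at hfinal
  linarith
end

section
/- Let 1 < p < ∞ and let J be an inner function with J(0) ≠ 0. Set Ĵ = conj(J(0))·J and g* = 1 − (1 − Ĵ)^{2/p} (defined via the analytic branch of the power, valid since 1 − Ĵ is nonvanishing on 𝔻). Then for every integer k ≥ 0, ∫_𝕋 |1 − g*|^{p−2} · (1 − g*) · conj(z^k J) dm = 0; i.e., 1 − g* is Birkhoff–James orthogonal in L^p to z^k J for all k ≥ 0. -/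
open Complex MeasureTheory Metric Filter Set
open scoped ENNReal

noncomputable def hardyNorm (p : ℝ) (f : ℂ → ℂ) : ℝ≥0∞ :=
  ⨆ r : Set.Ioo (0:ℝ) 1,
    ((∫⁻ θ in Set.Ioc (0:ℝ) (2 * Real.pi),
        ENNReal.ofReal (‖f (((r : ℝ) : ℂ) * Complex.exp ((θ : ℂ) * Complex.I))‖ ^ p)) /
      ENNReal.ofReal (2 * Real.pi)) ^ (1 / p)

def MemHp (p : ℝ) (f : ℂ → ℂ) : Prop :=
  DifferentiableOn ℂ f (Metric.ball (0:ℂ) 1) ∧ hardyNorm p f < ⊤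

def IsInner (J : ℂ → ℂ) : Prop :=
  DifferentiableOn ℂ J (Metric.ball (0:ℂ) 1) ∧
  (∀ z ∈ Metric.ball (0:ℂ) 1, ‖J z‖ ≤ 1) ∧
  (∀ᵐ (θ : ℝ) ∂(MeasureTheory.volume.restrict (Set.Ioc (0:ℝ) (2 * Real.pi))),
    Filter.Tendsto
      (fun r : ℝ => ‖J (((r : ℝ) : ℂ) * Complex.exp ((θ : ℂ) * Complex.I))‖)
      (nhdsWithin 1 (Set.Iio 1)) (nhds 1))

/-- Core pointwise `cpow` identity: for `w` in the right half plane,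
`|w^(2/p)|^(p-2) * w^(2/p) = conj(w^((p-2)/p)) * w`. -/
lemma stmt10_core_id (p : ℝ) (hp : 1 < p) (w : ℂ) (hw : 0 < w.re) :
    ((‖w ^ ((2 / p : ℂ))‖ ^ (p - 2) : ℝ) : ℂ) * (w ^ ((2 / p : ℂ))) =
      (starRingEnd ℂ) (w ^ ((((p:ℂ) - 2) / p))) * w := by
  have hp0 : (p : ℝ) ≠ 0 := by positivity
  have hw0 : w ≠ 0 := by
    intro h; rw [h] at hw; simp at hw
  set L := Complex.log w with hL
  have hwe : w = Complex.exp L := (Complex.exp_log hw0).symm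
  have h2p : ((2 / p : ℂ)) = ((2 / p : ℝ) : ℂ) := by push_cast; ring
  have hep : (((p:ℂ) - 2) / p) = (((p - 2) / p : ℝ) : ℂ) := by push_cast; ring
  rw [h2p, hep, Complex.cpow_def_of_ne_zero hw0, Complex.cpow_def_of_ne_zero hw0, ← hL]
  rw [Complex.norm_exp]
  have hre : (L * ((2 / p : ℝ) : ℂ)).re = L.re * (2 / p) := by
    simp [Complex.mul_re]
  rw [hre, Real.rpow_def_of_pos (Real.exp_pos _), Real.log_exp, Complex.ofReal_exp,
    ← Complex.exp_conj, map_mul, conj_ofReal]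
  conv_rhs => rw [hwe]
  rw [← Complex.exp_add, ← Complex.exp_add]
  congr 1
  have hre2 : ((L.re : ℂ)) = (L + (starRingEnd ℂ) L) / 2 := by
    rw [Complex.add_conj]; push_cast; ring
  push_cast
  rw [hre2]
  have hpc : (p:ℂ) ≠ 0 := by exact_mod_cast hp0
  field_simp
  ring

/-- Mean value property for a disk-holomorphic function vanishing at 0. -/
lemma stmt10_meanvalue {h : ℂ → ℂ} (hd : DifferentiableOn ℂ h (ball (0:ℂ) 1)) (h00 : h 0 = 0)
    {r : ℝ} (hr0 : 0 < r) (hr1 : r < 1) :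
    ∫ θ in Ioc (0:ℝ) (2 * Real.pi), h ((r : ℂ) * Complex.exp ((θ : ℂ) * Complex.I)) = 0 := by
  have hsub : closedBall (0:ℂ) r ⊆ ball (0:ℂ) 1 := by
    intro z hz
    simp only [mem_closedBall, mem_ball, dist_zero_right] at *
    exact lt_of_le_of_lt hz hr1
  have hdc : DiffContOnCl ℂ h (ball (0:ℂ) r) := by
    apply DifferentiableOn.diffContOnCl
    rw [closure_ball (0:ℂ) (ne_of_gt hr0)]
    exact hd.mono hsub
  have hc := hdc.circleIntegral_sub_inv_smul (mem_ball_self hr0)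
  rw [h00, smul_zero] at hc
  rw [circleIntegral] at hc
  have hne : ∀ θ : ℝ, circleMap 0 r θ ≠ 0 := fun θ => circleMap_ne_center (ne_of_gt hr0)
  have heq : ∀ θ : ℝ, deriv (circleMap 0 r) θ • ((circleMap 0 r θ - 0)⁻¹ • h (circleMap 0 r θ))
      = Complex.I * h (circleMap 0 r θ) := by
    intro θ
    rw [deriv_circleMap]
    simp only [sub_zero, smul_eq_mul]
    field_simp [hne θ]
  simp only [heq] at hc
  rw [intervalIntegral.integral_const_mul] at hc
  have h2 : ∫ θ in (0:ℝ)..(2 * Real.pi), h (circleMap 0 r θ) = 0 := by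
    rcases mul_eq_zero.mp hc with h' | h'
    · exact absurd h' Complex.I_ne_zero
    · exact h'
  rw [intervalIntegral.integral_of_le (by positivity)] at h2
  convert h2 using 2 with θ
  · rfl
  simp [circleMap]

/-- With `g* = 1 - (1 - conj(J 0) J)^(2/p)`, for every `k ≥ 0`, the boundary integral
`∫ |1 - g*|^(p-2) (1 - g*) conj(z^k J) dm = 0`,
i.e. `1 - g*` is Birkhoff–James orthogonal in `L^p` to `z^k J`. -/
theorem stmt10 (p : ℝ) (hp : 1 < p) (J : ℂ → ℂ) (hJ : IsInner J) (h0 : J 0 ≠ 0)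
    (jb : ℝ → ℂ)
    (hjb : ∀ᵐ (θ : ℝ) ∂(MeasureTheory.volume.restrict (Set.Ioc (0:ℝ) (2 * Real.pi))),
      Filter.Tendsto (fun r : ℝ => J (((r : ℝ) : ℂ) * Complex.exp ((θ : ℂ) * Complex.I)))
        (nhdsWithin 1 (Set.Iio 1)) (nhds (jb θ))) :
    ∀ k : ℕ,
      ∫ θ in Set.Ioc (0:ℝ) (2 * Real.pi),
        ((‖(1 - (starRingEnd ℂ) (J 0) * jb θ) ^ ((2 / p : ℂ))‖ ^ (p - 2) : ℝ) : ℂ) *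
          ((1 - (starRingEnd ℂ) (J 0) * jb θ) ^ ((2 / p : ℂ))) *
          (starRingEnd ℂ) (Complex.exp ((θ : ℂ) * Complex.I) ^ k * jb θ) = 0 := by
  intro k
  set μ := MeasureTheory.volume.restrict (Set.Ioc (0:ℝ) (2 * Real.pi)) with hμ
  set l := nhdsWithin (1:ℝ) (Set.Iio 1) with hl
  have hp0 : (p : ℝ) ≠ 0 := by positivity
  have hpc : (p : ℂ) ≠ 0 := by exact_mod_cast hp0
  have h2pne : (2 / (p:ℂ)) ≠ 0 := div_ne_zero two_ne_zero hpc
  have hev : ∀ᶠ r in l, r ∈ Set.Ioo (0:ℝ) 1 := by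
    have h1 : ∀ᶠ r in l, r < 1 := eventually_mem_nhdsWithin
    have h2 : ∀ᶠ r in l, 0 < r :=
      (eventually_gt_nhds zero_lt_one).filter_mono nhdsWithin_le_nhds
    filter_upwards [h1, h2] with r ha hb using ⟨hb, ha⟩
  have hmem : ∀ (r θ : ℝ), r ∈ Set.Ioo (0:ℝ) 1 →
      ((r:ℂ) * Complex.exp ((θ:ℂ) * Complex.I)) ∈ ball (0:ℂ) 1 := by
    intro r θ hr
    simp only [mem_ball, dist_zero_right, norm_mul, Complex.norm_exp]
    have : ((θ:ℂ) * Complex.I).re = 0 := by simp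
    rw [this, Real.exp_zero, Complex.norm_of_nonneg hr.1.le, mul_one]
    exact hr.2
  -- a.e. |jb θ| = 1
  have hmod : ∀ᵐ θ ∂μ, ‖jb θ‖ = 1 := by
    filter_upwards [hjb, hJ.2.2] with θ h1 h2
    exact tendsto_nhds_unique ((continuous_norm.tendsto (jb θ)).comp h1) h2
  by_cases hd1 : ‖J 0‖ < 1
  · -- main case
    set a := (starRingEnd ℂ) (J 0) with ha
    set d := ‖J 0‖ with hdd
    have hda : ‖a‖ = d := by rw [ha, hdd]; exact Complex.norm_conj _
    set e : ℂ := ((p:ℂ) - 2) / p with he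
    have heR : e = (((p - 2) / p : ℝ) : ℂ) := by rw [he]; push_cast; ring
    set s : ℝ := (p - 2) / p with hs
    -- half-plane facts
    have hw_re : ∀ u : ℂ, ‖u‖ ≤ 1 → 1 - d ≤ (1 - a * u).re := by
      intro u hu
      have h1 : (a * u).re ≤ ‖a * u‖ := Complex.re_le_norm _
      have h2 : ‖a * u‖ ≤ d := by
        rw [norm_mul, hda]
        calc d * ‖u‖ ≤ d * 1 := by
              exact mul_le_mul_of_nonneg_left hu (norm_nonneg _)
          _ = d := mul_one d
      have : (1 - a * u).re = 1 - (a * u).re := by simp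
      rw [this]; linarith
    have hw_pos : ∀ u : ℂ, ‖u‖ ≤ 1 → 0 < (1 - a * u).re := by
      intro u hu
      have := hw_re u hu
      linarith
    have hw_abs : ∀ u : ℂ, ‖u‖ ≤ 1 → ‖1 - a * u‖ ≤ 2 := by
      intro u hu
      calc ‖1 - a * u‖ ≤ ‖(1:ℂ)‖ + ‖a * u‖ := by
            exact (norm_sub_le _ _)
        _ ≤ 1 + 1 := by
            rw [norm_one, norm_mul, hda]
            have : d * ‖u‖ ≤ 1 * 1 :=
              mul_le_mul hd1.le hu (norm_nonneg _) zero_le_one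
            linarith
        _ = 2 := by norm_num
    -- cpow bound
    set B : ℝ := (1 - d) ^ s + 2 ^ s with hB
    have hcpow_bd : ∀ w : ℂ, 1 - d ≤ w.re → ‖w‖ ≤ 2 → ‖w ^ e‖ ≤ B := by
      intro w h1 h2
      have hdpos : 0 < 1 - d := by linarith
      have hwabs : 1 - d ≤ ‖w‖ := le_trans h1 (le_trans (Complex.re_le_norm w) le_rfl)
      have hw0 : w ≠ 0 := by
        intro h; rw [h] at h1; simp at h1; linarith
      rw [Complex.norm_cpow_of_ne_zero hw0, heR]
      simp only [Complex.ofReal_re, Complex.ofReal_im, mul_zero, Real.exp_zero, div_one]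
      rcases le_or_gt 0 s with hs0 | hs0
      · have : ‖w‖ ^ s ≤ 2 ^ s := Real.rpow_le_rpow (norm_nonneg _) h2 hs0
        have hpos : (0:ℝ) ≤ (1 - d) ^ s := Real.rpow_nonneg hdpos.le s
        rw [hB]; linarith
      · have : ‖w‖ ^ s ≤ (1 - d) ^ s :=
          Real.rpow_le_rpow_of_nonpos hdpos hwabs hs0.le
        have hpos : (0:ℝ) ≤ (2:ℝ) ^ s := Real.rpow_nonneg (by norm_num) s
        rw [hB]; linarith
    -- the holomorphic function h
    set h : ℂ → ℂ := fun z => z ^ k * ((1 - a * J z) ^ e) * (J z - J 0) with hh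
    have hdiff : DifferentiableOn ℂ h (ball (0:ℂ) 1) := by
      intro z hz
      have hJz : DifferentiableAt ℂ J z := hJ.1.differentiableAt (isOpen_ball.mem_nhds hz)
      have hslit : (1 - a * J z) ∈ Complex.slitPlane := Or.inl (hw_pos _ (hJ.2.1 z hz))
      exact (((differentiableAt_id.pow k).mul
        ((((differentiableAt_const (1:ℂ)).sub ((differentiableAt_const a).mul hJz)).cpow
          (differentiableAt_const e) hslit))).mul (hJz.sub (differentiableAt_const _))).differentiableWithinAt
    have hzero : h 0 = 0 := by simp [hh]
    set M : ℝ := B * 2 with hM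
    have hbound : ∀ z ∈ ball (0:ℂ) 1, ‖h z‖ ≤ M := by
      intro z hz
      have hJzb := hJ.2.1 z hz
      have hzb : ‖z‖ ≤ 1 := by
        simpa using (mem_ball_zero_iff.mp hz).le
      have h1 : ‖z ^ k‖ ≤ 1 := by
        rw [norm_pow]; exact pow_le_one₀ (norm_nonneg _) hzb
      have h2 : ‖(1 - a * J z) ^ e‖ ≤ B :=
        hcpow_bd _ (hw_re _ hJzb) (hw_abs _ hJzb)
      have h3 : ‖J z - J 0‖ ≤ 2 := by
        calc ‖J z - J 0‖ ≤ ‖J z‖ + ‖J 0‖ :=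
              norm_sub_le _ _
          _ ≤ 1 + 1 := add_le_add hJzb (hJ.2.1 0 (mem_ball_self one_pos))
          _ = 2 := by norm_num
      have hB0 : 0 ≤ B := le_trans (norm_nonneg _) h2
      rw [hh]
      simp only [norm_mul]
      calc ‖z ^ k‖ * ‖(1 - a * J z) ^ e‖ * ‖J z - J 0‖
          ≤ 1 * B * 2 := by
            apply mul_le_mul _ h3 (norm_nonneg _) (by positivity)
            exact mul_le_mul h1 h2 (norm_nonneg _) zero_le_one
        _ = M := by rw [hM]; ring
    -- boundary function
    set hb : ℝ → ℂ := fun θ =>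
      Complex.exp ((θ:ℂ) * Complex.I) ^ k * ((1 - a * jb θ) ^ e) * (jb θ - J 0) with hhb
    -- DCT
    have htend : Filter.Tendsto (fun r : ℝ => ∫ θ, h ((r:ℂ) * Complex.exp ((θ:ℂ) * Complex.I)) ∂μ)
        l (nhds (∫ θ, hb θ ∂μ)) := by
      apply MeasureTheory.tendsto_integral_filter_of_dominated_convergence (fun _ => M)
      · filter_upwards [hev] with r hr
        apply Continuous.aestronglyMeasurable
        apply (hdiff.continuousOn).comp_continuous
        · exact continuous_const.mul ((Complex.continuous_ofReal.mul continuous_const).cexp)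
        · exact fun θ => hmem r θ hr
      · filter_upwards [hev] with r hr
        exact Filter.Eventually.of_forall fun θ => hbound _ (hmem r θ hr)
      · exact MeasureTheory.integrable_const M
      · filter_upwards [hjb, hmod] with θ h1 h2
        have hrexp : Filter.Tendsto (fun r : ℝ => (r:ℂ) * Complex.exp ((θ:ℂ) * Complex.I))
            l (nhds (Complex.exp ((θ:ℂ) * Complex.I))) := by
          have : Filter.Tendsto (fun r : ℝ => (r:ℂ)) l (nhds 1) := by
            exact_mod_cast (Complex.continuous_ofReal.tendsto 1).mono_left nhdsWithin_le_nhds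
          simpa using this.mul_const _
        have hslit : (1 - a * jb θ) ∈ Complex.slitPlane := Or.inl (hw_pos _ h2.le)
        exact ((hrexp.pow k).mul
          (((tendsto_const_nhds.sub (h1.const_mul a)).cpow tendsto_const_nhds hslit))).mul
          (h1.sub tendsto_const_nhds)
    have hint0 : ∀ᶠ (r : ℝ) in l, (∫ θ, h ((r:ℂ) * Complex.exp ((θ:ℂ) * Complex.I)) ∂μ) = 0 := by
      filter_upwards [hev] with r hr
      exact stmt10_meanvalue hdiff hzero hr.1 hr.2
    have hbint : (∫ θ, hb θ ∂μ) = 0 :=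
      tendsto_nhds_unique ((Filter.tendsto_congr' hint0).mp htend) tendsto_const_nhds
    -- pointwise identity: integrand = conj (hb θ)
    have hptwise : ∀ᵐ θ ∂μ,
        ((‖(1 - a * jb θ) ^ ((2 / p : ℂ))‖ ^ (p - 2) : ℝ) : ℂ) *
          ((1 - a * jb θ) ^ ((2 / p : ℂ))) *
          (starRingEnd ℂ) (Complex.exp ((θ : ℂ) * Complex.I) ^ k * jb θ) =
        (starRingEnd ℂ) (hb θ) := by
      filter_upwards [hmod] with θ h2
      set w : ℂ := 1 - a * jb θ with hw
      have hwre : 0 < w.re := hw_pos _ h2.le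
      have hcore := stmt10_core_id p hp w hwre
      have hjbc : jb θ * (starRingEnd ℂ) (jb θ) = 1 := by
        rw [Complex.mul_conj, Complex.normSq_eq_norm_sq, h2]; norm_num
      have hwc : w * (starRingEnd ℂ) (jb θ) = (starRingEnd ℂ) (jb θ - J 0) := by
        rw [hw, ha, map_sub]
        linear_combination (-(starRingEnd ℂ) (J 0)) * hjbc
      have key : ((‖w ^ ((2 / p : ℂ))‖ ^ (p - 2) : ℝ) : ℂ) * (w ^ ((2 / p : ℂ))) =
          (starRingEnd ℂ) (w ^ e) * w := by rw [he]; exact hcore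
      rw [hhb]
      simp only [map_mul]
      rw [← hw]
      linear_combination ((starRingEnd ℂ) (Complex.exp ((θ:ℂ) * Complex.I) ^ k) *
          (starRingEnd ℂ) (jb θ)) * key +
        ((starRingEnd ℂ) (Complex.exp ((θ:ℂ) * Complex.I) ^ k) *
          (starRingEnd ℂ) (w ^ e)) * hwc
    calc (∫ θ in Set.Ioc (0:ℝ) (2 * Real.pi),
          ((‖(1 - (starRingEnd ℂ) (J 0) * jb θ) ^ ((2 / p : ℂ))‖ ^ (p - 2) : ℝ) : ℂ) *
            ((1 - (starRingEnd ℂ) (J 0) * jb θ) ^ ((2 / p : ℂ))) *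
            (starRingEnd ℂ) (Complex.exp ((θ : ℂ) * Complex.I) ^ k * jb θ))
        = ∫ θ, (starRingEnd ℂ) (hb θ) ∂μ := MeasureTheory.integral_congr_ae hptwise
      _ = (starRingEnd ℂ) (∫ θ, hb θ ∂μ) := integral_conj
      _ = 0 := by rw [hbint]; simp
  · -- |J 0| = 1 : J is constant, integrand vanishes a.e.
    have habs1 : ‖J 0‖ = 1 :=
      le_antisymm (hJ.2.1 0 (mem_ball_self one_pos)) (not_lt.mp hd1)
    have hmax : IsMaxOn (norm ∘ J) (ball (0:ℂ) 1) 0 := by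
      intro z hz
      simp only [Function.comp_apply, habs1]
      exact hJ.2.1 z hz
    have hconst : EqOn J (Function.const ℂ (J 0)) (ball (0:ℂ) 1) :=
      eqOn_of_isPreconnected_of_isMaxOn_norm (convex_ball (0:ℂ) 1).isPreconnected
        isOpen_ball hJ.1 (mem_ball_self one_pos) hmax
    have hjbc : ∀ᵐ θ ∂μ, jb θ = J 0 := by
      filter_upwards [hjb] with θ h1
      have hev : ∀ᶠ r in l, r ∈ Set.Ioo (0:ℝ) 1 := by
        have ha : ∀ᶠ r in l, r < 1 := eventually_mem_nhdsWithin
        have hb : ∀ᶠ r in l, 0 < r :=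
          (eventually_gt_nhds zero_lt_one).filter_mono nhdsWithin_le_nhds
        filter_upwards [ha, hb] with r h1 h2 using ⟨h2, h1⟩
      have hev2 : ∀ᶠ (r : ℝ) in l, J ((r:ℂ) * Complex.exp ((θ:ℂ) * Complex.I)) = J 0 := by
        filter_upwards [hev] with r hr
        apply hconst
        simp only [mem_ball, dist_zero_right, norm_mul, Complex.norm_exp]
        have : ((θ:ℂ) * Complex.I).re = 0 := by simp
        rw [this, Real.exp_zero, Complex.norm_of_nonneg hr.1.le, mul_one]
        exact hr.2
      have : Filter.Tendsto (fun r : ℝ => J ((r:ℂ) * Complex.exp ((θ:ℂ) * Complex.I)))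
          l (nhds (J 0)) := Filter.Tendsto.congr' (hev2.mono fun r hr => hr.symm) tendsto_const_nhds
      exact tendsto_nhds_unique h1 this
    have hzero : ∀ᵐ θ ∂μ,
        ((‖(1 - (starRingEnd ℂ) (J 0) * jb θ) ^ ((2 / p : ℂ))‖ ^ (p - 2) : ℝ) : ℂ) *
          ((1 - (starRingEnd ℂ) (J 0) * jb θ) ^ ((2 / p : ℂ))) *
          (starRingEnd ℂ) (Complex.exp ((θ : ℂ) * Complex.I) ^ k * jb θ) = 0 := by
      filter_upwards [hjbc] with θ hθ
      have hw0 : (1 : ℂ) - (starRingEnd ℂ) (J 0) * jb θ = 0 := by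
        rw [hθ, mul_comm, Complex.mul_conj, Complex.normSq_eq_norm_sq, habs1]
        norm_num
      rw [hw0, Complex.zero_cpow h2pne]
      simp
    rw [MeasureTheory.integral_congr_ae hzero, integral_zero]
end
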